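/- If z·ln 2 > α and 2(αz + r)ln 2 - α² > 0, then the cutoff θ₁ = z²·ln 2/(2(αz+r)ln 2 - α²) - 1 is strictly decreasing in α; that is, for fixed standard z, more hawkish incumbents (higher α) have a strictly lower marginal re-elected ability. -/
import Mathlib

/-- If `z·ln 2 > α` and the denominator is positive (for both ideologies), then
the cutoff `θ₁(α) = z²·ln 2/(2(αz+r)·ln 2 - α²) - 1` is strictly decreasing in
`α`: more hawkish incumbents have a strictly lower marginal re-elected ability. -/
theorem stmt_9 (z r : ℝ) (hz : 0 < z) (hr : 0 ≤ r) :
    ∀ α₁ α₂ : ℝ, 0 < α₁ → 0 < α₂ →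
      α₁ < z * Real.log 2 → α₂ < z * Real.log 2 →
      0 < 2 * (α₁ * z + r) * Real.log 2 - α₁ ^ 2 →
      0 < 2 * (α₂ * z + r) * Real.log 2 - α₂ ^ 2 →
      α₁ < α₂ →
      z ^ 2 * Real.log 2 / (2 * (α₂ * z + r) * Real.log 2 - α₂ ^ 2) - 1 <
      z ^ 2 * Real.log 2 / (2 * (α₁ * z + r) * Real.log 2 - α₁ ^ 2) - 1 := by
  intro α₁ α₂ h1 h2 hb1 hb2 hd1 hd2 hlt
  have hlog : 0 < Real.log 2 := Real.log_pos (by norm_num)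
  have hnum : 0 < z ^ 2 * Real.log 2 := by positivity
  have hden : 2 * (α₁ * z + r) * Real.log 2 - α₁ ^ 2 <
      2 * (α₂ * z + r) * Real.log 2 - α₂ ^ 2 := by nlinarith
  have := div_lt_div_of_pos_left hnum hd1 hden
  linarith
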